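/- For any point x in the convex hull of an n-simplex σ, there exists a permutation (i₀,...,iₙ) of (0,...,n) such that x lies in the convex hull of the maximal subdivision simplex σ^{i₀⋯iₙ}; i.e., the geometric realizations of the maximal simplices of the barycentric subdivision cover |σ|. -/

import Mathlib

/-- Vertices `wᵏ = (1/(k+1))·∑_{j≤k} v^{π(j)}` of the maximal simplex of the
barycentric subdivision determined by the ordering `π`. -/
noncomputable def wVert (n : ℕ) (v : Fin (n + 1) → Fin n → ℝ)
    (π : Equiv.Perm (Fin (n + 1))) : Fin (n + 1) → Fin n → ℝ :=
  fun k => (1 / ((k : ℕ) + 1 : ℝ)) • ∑ j ∈ Finset.Iic k, v (π j)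

private lemma sum_Iic_fin {M : Type*} [AddCommMonoid M] (n : ℕ) (g : Fin (n + 1) → M)
    (k : Fin (n + 1)) :
    ∑ j ∈ Finset.Iic k, g j
      = ∑ m ∈ Finset.range ((k : ℕ) + 1), if h : m < n + 1 then g ⟨m, h⟩ else 0 := by
  refine Finset.sum_nbij' (fun j => (j : ℕ)) (fun m => if h : m < n + 1 then ⟨m, h⟩ else 0)
    ?_ ?_ ?_ ?_ ?_
  · intro j hj
    simp only [Finset.mem_Iic] at hj
    simp [Finset.mem_range, Nat.lt_succ_iff, (Fin.le_def.mp hj)]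
  · intro m hm
    simp only [Finset.mem_range, Nat.lt_succ_iff] at hm
    have hm' : m < n + 1 := lt_of_le_of_lt hm k.isLt
    simp only [hm', dif_pos, Finset.mem_Iic]
    exact Fin.le_def.mpr hm
  · intro j _; simp [Nat.le_of_lt_succ j.isLt]
  · intro m hm
    simp only [Finset.mem_range, Nat.lt_succ_iff] at hm
    have hm' : m < n + 1 := lt_of_le_of_lt hm k.isLt
    simp [hm']
  · intro j hj
    simp [j.isLt]

/-- The geometric realizations of the maximal simplices of the barycentric
subdivision cover `|σ|`: every `x ∈ |σ|` lies in some `|σ^{i₀⋯iₙ}|`. -/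
theorem stmt_7 (n : ℕ) (v : Fin (n + 1) → Fin n → ℝ)
    (hv : AffineIndependent ℝ v) (x : Fin n → ℝ)
    (hx : x ∈ convexHull ℝ (Set.range v)) :
    ∃ π : Equiv.Perm (Fin (n + 1)),
      x ∈ convexHull ℝ (Set.range (wVert n v π)) := by
  classical
  -- extract convex combination weights
  rw [convexHull_range_eq_exists_affineCombination] at hx
  obtain ⟨s, w, hw₀, hw₁, hwx⟩ := hx
  set c : Fin (n + 1) → ℝ := fun i => if i ∈ s then w i else 0 with hc
  have hc₀ : ∀ i, 0 ≤ c i := by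
    intro i; by_cases h : i ∈ s <;> simp [hc, h, hw₀ i]
  have hc₁ : ∑ i, c i = 1 := by
    rw [hc, Finset.sum_ite_mem, Finset.univ_inter, hw₁]
  have hcx : x = ∑ i, c i • v i := by
    rw [← hwx, Finset.affineCombination_eq_linear_combination s v w hw₁, hc]
    have h1 : ∀ i : Fin (n + 1), (if i ∈ s then w i else 0) • v i
        = if i ∈ s then w i • v i else 0 := by
      intro i; split <;> simp
    simp only [h1]
    rw [Finset.sum_ite_mem, Finset.univ_inter]
  -- sort the weights in non-increasing order
  set π : Equiv.Perm (Fin (n + 1)) := Tuple.sort (fun i => -c i) with hπ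
  have hmono : Monotone ((fun i => -c i) ∘ π) := Tuple.monotone_sort _
  have hanti : ∀ j k : Fin (n + 1), j ≤ k → c (π k) ≤ c (π j) := by
    intro j k hjk
    have := hmono hjk
    simp only [Function.comp_apply] at this
    linarith
  -- weights extended to ℕ
  set b : ℕ → ℝ := fun m => if h : m < n + 1 then c (π ⟨m, h⟩) else 0 with hb
  have hb₀ : ∀ m, 0 ≤ b m := by
    intro m; by_cases h : m ≤ n <;> simp [hb, h, hc₀]
  have hbanti : ∀ m, b (m + 1) ≤ b m := by
    intro m
    by_cases h : m + 1 < n + 1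
    · have h' : m < n + 1 := Nat.lt_of_succ_lt h
      simp only [hb, dif_pos h, dif_pos h']
      exact hanti ⟨m, h'⟩ ⟨m + 1, h⟩ (by simp [Fin.le_def])
    · simp only [hb, dif_neg h]
      exact hb₀ m
  have hbtop : b (n + 1) = 0 := by simp [hb]
  have hbfin : ∀ k : Fin (n + 1), b (k : ℕ) = c (π k) := by
    intro k; simp [hb, k.isLt, Nat.le_of_lt_succ k.isLt]
  have hbsum : ∑ m ∈ Finset.range (n + 1), b m = 1 := by
    rw [← Fin.sum_univ_eq_sum_range]
    calc ∑ k : Fin (n + 1), b (k : ℕ) = ∑ k : Fin (n + 1), c (π k) := by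
          exact Finset.sum_congr rfl fun k _ => hbfin k
      _ = ∑ i, c i := Equiv.sum_comp π c
      _ = 1 := hc₁
  -- the new weights
  set d : Fin (n + 1) → ℝ := fun k => ((k : ℕ) + 1 : ℝ) * (b (k : ℕ) - b ((k : ℕ) + 1))
    with hd
  have hd₀ : ∀ k, 0 ≤ d k := by
    intro k
    apply mul_nonneg (by positivity)
    linarith [hbanti (k : ℕ)]
  have hdsum : ∑ k, d k = 1 := by
    rw [Fin.sum_univ_eq_sum_range (fun m => ((m : ℝ) + 1) * (b m - b (m + 1)))]
    have key : ∀ m ∈ Finset.range (n + 1),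
        ((m : ℝ) + 1) * (b m - b (m + 1))
          = ((m : ℝ) * b m - ((m + 1 : ℕ) : ℝ) * b (m + 1)) + b m := by
      intro m _; push_cast; ring
    rw [Finset.sum_congr rfl key, Finset.sum_add_distrib,
      Finset.sum_range_sub' (fun m => (m : ℝ) * b m), hbsum, hbtop]
    simp
  -- partial sums of vertices
  set u : ℕ → (Fin n → ℝ) := fun m => if h : m < n + 1 then v (π ⟨m, h⟩) else 0 with hu
  set U : ℕ → (Fin n → ℝ) := fun m => ∑ j ∈ Finset.range m, u j with hU
  have hwvert : ∀ k : Fin (n + 1), wVert n v π k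
      = (1 / ((k : ℕ) + 1 : ℝ)) • U ((k : ℕ) + 1) := by
    intro k
    rw [wVert, hU]
    congr 1
    exact sum_Iic_fin n (fun j => v (π j)) k
  have hdw : ∀ k : Fin (n + 1), d k • wVert n v π k
      = (b (k : ℕ) - b ((k : ℕ) + 1)) • U ((k : ℕ) + 1) := by
    intro k
    rw [hwvert k, smul_smul, hd]
    congr 1
    have : ((k : ℕ) + 1 : ℝ) ≠ 0 := by positivity
    field_simp
  refine ⟨π, ?_⟩
  have hxeq : x = ∑ k, d k • wVert n v π k := by
    rw [Finset.sum_congr rfl fun k _ => hdw k]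
    rw [Fin.sum_univ_eq_sum_range (fun m => (b m - b (m + 1)) • U (m + 1))]
    have key : ∀ m ∈ Finset.range (n + 1),
        (b m - b (m + 1)) • U (m + 1)
          = (b m • U m - b (m + 1) • U (m + 1)) + b m • u m := by
      intro m _
      have hUsucc : U (m + 1) = U m + u m := by
        rw [hU]; exact Finset.sum_range_succ u m
      rw [hUsucc]
      module
    rw [Finset.sum_congr rfl key, Finset.sum_add_distrib,
      Finset.sum_range_sub' (fun m => b m • U m), hbtop]
    have hU0 : U 0 = 0 := by simp [hU]
    rw [hU0]
    simp only [smul_zero, zero_smul, sub_zero, zero_add]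
    rw [hcx, ← Fin.sum_univ_eq_sum_range (fun m => b m • u m)]
    calc ∑ i, c i • v i = ∑ k : Fin (n + 1), c (π k) • v (π k) :=
          (Equiv.sum_comp π (fun i => c i • v i)).symm
      _ = ∑ k : Fin (n + 1), b (k : ℕ) • u (k : ℕ) := by
          refine Finset.sum_congr rfl fun k _ => ?_
          simp [hb, hu, k.isLt, Nat.le_of_lt_succ k.isLt]
  rw [hxeq, ← Finset.centerMass_eq_of_sum_1 _ _ hdsum]
  exact Finset.centerMass_mem_convexHull Finset.univ (fun i _ => hd₀ i)
    (by rw [hdsum]; norm_num) (fun i _ => Set.mem_range_self i)
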